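/- arXiv:1811.11444 — 3 statements merged into one kernel-verified Lean document; each statement's English description precedes it below -/
import Mathlib

section
/- For all integers i ≥ 1 and n ≥ 1, the number of distinct squares occurring as factors of F[i;n] is strictly less than n. In other words, every factor of the Fibonacci word of length n contains fewer than n distinct square factors. -/
/-- Fibonacci numbers: `fn 0 = 1`, `fn 1 = 2`, `fn (m+2) = fn (m+1) + fn m`
(so `fn m` is the paper's `f_m`; also `f_{m-1} = Nat.fib (m+1)` etc.). -/
def fn (m : ℕ) : ℕ := Nat.fib (m + 2)

/-- Finite Fibonacci words `Fw m = σ^m(a)` for the morphism σ(a)=ab, σ(b)=a,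
with `a := false`, `b := true`; equivalently `Fw (m+2) = Fw (m+1) ++ Fw m`. -/
def Fw : ℕ → List Bool
  | 0 => [false]
  | 1 => [false, true]
  | m + 2 => Fw (m + 1) ++ Fw m

/-- The infinite Fibonacci word (0-indexed): the fixed point of σ beginning with `a`. -/
def fibWord (i : ℕ) : Bool := (Fw (i + 1)).getD i false

/-- `fFactor i n = F[i;n]`, the factor of length `n` of the Fibonacci word
beginning at (1-indexed) position `i`. -/
def fFactor (i n : ℕ) : List Bool := (List.range n).map fun t => fibWord (i - 1 + t)

/-- `w` occurs as a factor of the infinite Fibonacci word. -/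
def IsFactorF (w : List Bool) : Prop := ∃ i : ℕ, 1 ≤ i ∧ w = fFactor i w.length

/-- `D2 i n`: the number of distinct squares occurring as factors of `F[i;n]`. -/
noncomputable def D2 (i n : ℕ) : ℕ :=
  {w : List Bool | w ≠ [] ∧ (w ++ w) <:+: fFactor i n}.ncard

namespace FibSq

lemma fn_pos (m : ℕ) : 0 < fn m := Nat.fib_pos.2 (by omega)

lemma fn_add_two (m : ℕ) : fn (m + 2) = fn (m + 1) + fn m := by
  show Nat.fib (m + 4) = Nat.fib (m + 3) + Nat.fib (m + 2)
  rw [show m + 4 = (m + 2) + 2 from rfl, Nat.fib_add_two, show m + 2 + 1 = m + 3 from rfl]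
  omega

lemma lt_fn : ∀ m, m < fn m
  | 0 => by decide
  | 1 => by decide
  | (m+2) => by have h1 := lt_fn (m+1); have h2 := fn_pos m; rw [fn_add_two]; omega

lemma Fw_two : Fw 2 = [false, true, false] := rfl

lemma length_Fw : ∀ m, (Fw m).length = fn m
  | 0 => by decide
  | 1 => by decide
  | (m+2) => by
      show (Fw (m+1) ++ Fw m).length = _
      rw [List.length_append, length_Fw (m+1), length_Fw m, fn_add_two]

lemma Fw_prefix_succ : ∀ m, Fw m <+: Fw (m + 1)
  | 0 => ⟨[true], rfl⟩
  | (m+1) => ⟨Fw m, rfl⟩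

lemma Fw_prefix {m M : ℕ} (h : m ≤ M) : Fw m <+: Fw M := by
  induction M with
  | zero => cases Nat.le_zero.1 h; exact List.prefix_refl _
  | succ M ih =>
    rcases Nat.lt_or_ge m (M + 1) with h' | h'
    · exact (ih (by omega)).trans (Fw_prefix_succ M)
    · have : m = M + 1 := by omega
      subst this; exact List.prefix_refl _

lemma fibWord_getD {M j : ℕ} (hj : j < fn M) : fibWord j = (Fw M).getD j false := by
  unfold fibWord
  rcases le_total (j + 1) M with h | h
  · obtain ⟨t, ht⟩ := Fw_prefix h
    rw [← ht, List.getD_append _ _ _ _ (by rw [length_Fw]; have := lt_fn (j+1); omega)]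
  · obtain ⟨t, ht⟩ := Fw_prefix h
    rw [← ht, List.getD_append _ _ _ _ (by rw [length_Fw]; exact hj)]

lemma getElem_Fw {M j : ℕ} (hj : j < (Fw M).length) : (Fw M)[j] = fibWord j := by
  rw [fibWord_getD (M := M) (by rwa [length_Fw] at hj), List.getD_eq_getElem _ _ hj]

/-- the prefix of length `m` of the infinite Fibonacci word -/
def prefF (m : ℕ) : List Bool := (List.range m).map fibWord

/-- the factor of length `d` of the infinite Fibonacci word starting at 0-indexed `a` -/
def seg (a d : ℕ) : List Bool := (List.range d).map fun t => fibWord (a + t)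

@[simp] lemma length_prefF (m : ℕ) : (prefF m).length = m := by simp [prefF]

@[simp] lemma length_seg (a d : ℕ) : (seg a d).length = d := by simp [seg]

@[simp] lemma getElem_prefF {m j : ℕ} (h : j < (prefF m).length) : (prefF m)[j] = fibWord j := by
  simp [prefF]

@[simp] lemma getElem_seg {a d j : ℕ} (h : j < (seg a d).length) : (seg a d)[j] = fibWord (a + j) := by
  simp [seg]

lemma prefF_eq_take {m M : ℕ} (h : m ≤ fn M) : prefF m = (Fw M).take m := by
  apply List.ext_getElem (by rw [length_prefF, List.length_take, length_Fw]; omega)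
  intro i h1 h2
  rw [List.length_take, length_Fw] at h2
  rw [List.getElem_take, getElem_Fw (by rw [length_Fw]; omega)]
  simp

lemma eq_prefF_of_prefix {l : List Bool} {M : ℕ} (h : l <+: Fw M) : l = prefF l.length := by
  have hlen : l.length ≤ fn M := by rw [← length_Fw]; exact h.length_le
  rw [prefF_eq_take hlen, ← List.prefix_iff_eq_take.1 h]

lemma prefF_add (m d : ℕ) : prefF (m + d) = prefF m ++ seg m d := by
  unfold prefF seg
  rw [List.range_add, List.map_append, List.map_map]
  rfl

lemma seg_take (a n d : ℕ) : (seg a n).take d = seg a (min d n) := by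
  unfold seg
  rw [← List.map_take, List.take_range]

lemma seg_append (a d e : ℕ) : seg a (d + e) = seg a d ++ seg (a + d) e := by
  have h1 := prefF_add a (d + e)
  have h2 := prefF_add (a + d) e
  have h3 := prefF_add a d
  rw [← Nat.add_assoc] at h1
  have h4 := h1.symm.trans h2
  rw [h3, List.append_assoc] at h4
  exact List.append_cancel_left h4

lemma seg_drop {a n d : ℕ} (h : d ≤ n) : (seg a n).drop d = seg (a + d) (n - d) := by
  conv_lhs => rw [show n = d + (n - d) by omega, seg_append]
  have h2 := List.drop_left (l₁ := seg a d) (l₂ := seg (a + d) (n - d))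
  rw [length_seg] at h2
  rw [h2]


/-! ### The morphism σ and the block structure of the Fibonacci word -/

/-- the morphism σ(a)=ab, σ(b)=a with a = false, b = true -/
def sig (l : List Bool) : List Bool := l.flatMap fun x => if x then [false] else [false, true]

lemma sig_append (l l' : List Bool) : sig (l ++ l') = sig l ++ sig l' :=
  List.flatMap_append (xs := l) (ys := l')

lemma sig_Fw : ∀ m, sig (Fw m) = Fw (m + 1)
  | 0 => rfl
  | 1 => rfl
  | (m+2) => by
      show sig (Fw (m+1) ++ Fw m) = Fw (m+2) ++ Fw (m+1)
      rw [sig_append, sig_Fw (m+1), sig_Fw m]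

/-- start position of the m-th block (blocks are images of letters under σ) -/
def posF (m : ℕ) : ℕ := (sig (prefF m)).length

lemma posF_zero : posF 0 = 0 := rfl

lemma sig_prefF (m : ℕ) : sig (prefF m) = prefF (posF m) := by
  have h1 : prefF m = (Fw m).take m := prefF_eq_take (le_of_lt (lt_fn m))
  have h2 : sig (prefF m) <+: Fw (m + 1) := by
    rw [← sig_Fw m]
    conv_rhs => rw [← List.take_append_drop m (Fw m), sig_append]
    rw [← h1]
    exact List.prefix_append _ _
  exact eq_prefF_of_prefix h2

lemma prefF_succ (m : ℕ) : prefF (m + 1) = prefF m ++ [fibWord m] := by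
  unfold prefF
  rw [List.range_succ, List.map_append]
  rfl

lemma sig_single (x : Bool) : sig [x] = if x then [false] else [false, true] := by
  simp [sig]

lemma posF_succ (m : ℕ) : posF (m + 1) = posF m + (if fibWord m then 1 else 2) := by
  unfold posF
  rw [prefF_succ, sig_append, List.length_append, sig_single]
  cases fibWord m <;> rfl

lemma posF_lt_succ (m : ℕ) : posF m < posF (m + 1) := by
  rw [posF_succ]; cases fibWord m <;> simp

lemma posF_succ_le (m : ℕ) : posF (m + 1) ≤ posF m + 2 := by
  rw [posF_succ]; cases fibWord m <;> simp

lemma posF_add_le (m s : ℕ) : posF m + s ≤ posF (m + s) := by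
  induction s with
  | zero => simp
  | succ s ih =>
      have h := posF_lt_succ (m + s)
      have h2 : posF (m + (s + 1)) = posF (m + s + 1) := rfl
      omega

lemma posF_mono {m m' : ℕ} (h : m ≤ m') : posF m ≤ posF m' := by
  have := posF_add_le m (m' - m)
  rw [show m + (m' - m) = m' by omega] at this
  omega

lemma posF_lt_of_lt {m m' : ℕ} (h : m < m') : posF m < posF m' := by
  have h1 := posF_lt_succ m
  have h2 := posF_mono (show m + 1 ≤ m' by omega)
  omega

lemma le_posF (m : ℕ) : m ≤ posF m := by
  have := posF_add_le 0 m
  simpa [posF_zero] using this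

/-- the block of the m-th letter, written at position `posF m` -/
lemma prefF_block (m : ℕ) :
    prefF (posF (m + 1)) = prefF (posF m) ++ (if fibWord m then [false] else [false, true]) := by
  rw [← sig_prefF, ← sig_prefF, prefF_succ, sig_append, sig_single]

lemma fibWord_posF (m : ℕ) : fibWord (posF m) = false := by
  have h := congrArg (fun l => l.getD (posF m) false) (prefF_block m)
  rw [List.getD_eq_getElem _ _ (by rw [length_prefF]; exact posF_lt_succ m), getElem_prefF,
      List.getD_append_right _ _ _ _ (by rw [length_prefF])] at h
  rw [h]
  cases fibWord m <;> simp

lemma fibWord_posF_succ (m : ℕ) : fibWord (posF m + 1) = !fibWord m := by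
  cases hm : fibWord m
  · have h := congrArg (fun l => l.getD (posF m + 1) false) (prefF_block m)
    have hl : posF (m + 1) = posF m + 2 := by rw [posF_succ, hm]; rfl
    rw [List.getD_eq_getElem _ _ (by rw [length_prefF]; omega), getElem_prefF,
        List.getD_append_right _ _ _ _ (by rw [length_prefF]; omega)] at h
    rw [h, hm]
    simp
  · have hl : posF (m + 1) = posF m + 1 := by rw [posF_succ, hm]; rfl
    rw [← hl, fibWord_posF (m + 1)]
    rfl

lemma exists_block (j : ℕ) : ∃ m, posF m ≤ j ∧ j < posF (m + 1) := by
  classical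
  set P : ℕ → Prop := fun m => posF m ≤ j with hP
  have hub : ∀ m, P m → m ≤ j := fun m hm => le_trans (le_posF m) hm
  have h0 : P 0 := by simp [hP, posF_zero]
  refine ⟨Nat.findGreatest P j, Nat.findGreatest_spec (Nat.zero_le j) h0, ?_⟩
  by_contra hcon
  push_neg at hcon
  have : Nat.findGreatest P j + 1 ≤ Nat.findGreatest P j :=
    Nat.le_findGreatest (hub _ hcon) hcon
  omega

lemma eq_posF_of_false {j : ℕ} (h : fibWord j = false) : ∃ m, j = posF m := by
  obtain ⟨m, h1, h2⟩ := exists_block j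
  rcases Nat.lt_or_ge (posF m) j with h3 | h3
  · exfalso
    have hs := posF_succ_le m
    have hj : j = posF m + 1 := by omega
    have hblen : posF m + 1 < posF (m + 1) := by omega
    have hfm : fibWord m = false := by
      by_contra hc
      rw [Bool.not_eq_false] at hc
      rw [posF_succ, hc] at hblen
      norm_num at hblen
    rw [hj, fibWord_posF_succ, hfm] at h
    simp at h
  · exact ⟨m, by omega⟩

lemma eq_posF_succ_of_true {j : ℕ} (h : fibWord j = true) :
    ∃ m, j = posF m + 1 ∧ fibWord m = false ∧ posF (m + 1) = j + 1 := by
  obtain ⟨m, h1, h2⟩ := exists_block j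
  have hne : j ≠ posF m := by
    intro hc
    rw [hc, fibWord_posF] at h
    exact Bool.noConfusion h
  have hs := posF_succ_le m
  have hj : j = posF m + 1 := by omega
  have hfm : fibWord m = false := by
    by_contra hc
    rw [Bool.not_eq_false] at hc
    rw [posF_succ, hc] at h2
    norm_num at h2
    omega
  refine ⟨m, hj, hfm, ?_⟩
  rw [posF_succ, hfm]
  simp; omega

lemma no_bb {j : ℕ} (h : fibWord j = true) : fibWord (j + 1) = false := by
  obtain ⟨m, _, _, h3⟩ := eq_posF_succ_of_true h
  rw [← h3, fibWord_posF]

lemma blen_of_true {m : ℕ} (h : fibWord m = true) : posF (m + 1) = posF m + 1 := by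
  rw [posF_succ, h]; rfl

lemma blen_of_false {m : ℕ} (h : fibWord m = false) : posF (m + 1) = posF m + 2 := by
  rw [posF_succ, h]; rfl

/-- two block-steps advance the position by at least 3 -/
lemma posF_two_step (m : ℕ) : posF m + 3 ≤ posF (m + 2) := by
  have hr : posF (m + 1 + 1) = posF (m + 2) := rfl
  cases hm : fibWord m
  · have h1 := blen_of_false hm
    have h2 := posF_lt_succ (m + 1)
    omega
  · have h1 := blen_of_true hm
    have h2 := blen_of_false (no_bb hm)
    omega

lemma sig_seg {m M : ℕ} (h : m ≤ M) :
    sig (seg m (M - m)) = seg (posF m) (posF M - posF m) := by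
  have e1 : prefF M = prefF m ++ seg m (M - m) := by
    rw [← prefF_add]; congr 1; omega
  have e2 : prefF (posF M) = prefF (posF m) ++ seg (posF m) (posF M - posF m) := by
    rw [← prefF_add]; congr 1; have := posF_mono h; omega
  have e3 := sig_prefF M
  rw [e1, sig_append, sig_prefF m, e2] at e3
  exact List.append_cancel_left e3


/-! ### Squares (and near-squares) in the Fibonacci word have Fibonacci roots -/

lemma sig_rotate (l : List Bool) (c : ℕ) (hc : c ≤ l.length) :
    sig (l.rotate c) = (sig l).rotate (sig (l.take c)).length := by
  rw [List.rotate_eq_drop_append_take hc, sig_append]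
  set N := (sig (l.take c)).length with hN
  conv_rhs => rw [← List.take_append_drop c l, sig_append]
  rw [show N = (sig (List.take c l)).length from hN,
      List.rotate_eq_drop_append_take (by rw [List.length_append]; omega),
      List.drop_left, List.take_left]

lemma seg_succ_right (a d : ℕ) : seg a (d + 1) = seg a d ++ [fibWord (a + d)] := by
  unfold seg
  rw [List.range_succ, List.map_append]
  rfl

lemma seg_succ_left (a d : ℕ) : seg a (d + 1) = fibWord a :: seg (a + 1) d := by
  have h := seg_append a 1 d
  rw [Nat.add_comm 1 d] at h
  rw [h]
  have : List.range 1 = [0] := rfl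
  unfold seg
  rw [this]
  rfl

theorem seg_conj : ∀ q, 2 ≤ q → ∀ j,
    (∀ t, t + 2 ≤ q → fibWord (j + t) = fibWord (j + q + t)) →
    ∃ k c, seg j q = (Fw k).rotate c := by
  intro q
  induction q using Nat.strong_induction_on with
  | _ q IH =>
  intro hq j hper
  -- Main case: the factor starts with the letter a (= false)
  have key : ∀ j', fibWord j' = false →
      (∀ t, t + 2 ≤ q → fibWord (j' + t) = fibWord (j' + q + t)) →
      ∃ k c, seg j' q = (Fw k).rotate c := by
    clear hper j
    intro j hj hper
    obtain ⟨m, hm⟩ := eq_posF_of_false hj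
    have hjq : fibWord (j + q) = false := by
      have h0 := hper 0 (by omega)
      rw [show j + 0 = j from rfl, show j + q + 0 = j + q from rfl] at h0
      rw [← h0, hj]
    obtain ⟨m', hm'⟩ := eq_posF_of_false hjq
    have hmm : m < m' := by
      by_contra hc
      push_neg at hc
      have := posF_mono hc
      omega
    set q' := m' - m with hq'
    have hm'eq : m' = m + q' := by omega
    have hq'pos : 1 ≤ q' := by omega
    have hbound : ∀ s, s + 2 ≤ q' → posF (m + s) + 3 ≤ j + q := by
      intro s hs
      have h1 : posF (m + s) ≤ posF (m + (q' - 2)) := posF_mono (by omega)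
      have h2 := posF_two_step (m + (q' - 2))
      have h3 : posF (m + (q' - 2) + 2) ≤ posF m' := posF_mono (by omega)
      omega
    have hletter : ∀ s, s + 2 ≤ q' → posF (m' + s) = posF (m + s) + q →
        fibWord (m' + s) = fibWord (m + s) := by
      intro s hs hDs
      have hb := hbound s hs
      have hg : j ≤ posF (m + s) := by
        have := posF_mono (show m ≤ m + s by omega); omega
      have hp := hper (posF (m + s) + 1 - j) (by omega)
      rw [show j + (posF (m + s) + 1 - j) = posF (m + s) + 1 by omega,
          show j + q + (posF (m + s) + 1 - j) = posF (m' + s) + 1 by omega] at hp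
      have e1 := fibWord_posF_succ (m + s)
      have e2 := fibWord_posF_succ (m' + s)
      have e3 := e1.symm.trans (hp.trans e2)
      exact (Bool.not_inj e3).symm
    have aux : ∀ s, s + 1 ≤ q' → posF (m' + s) = posF (m + s) + q := by
      intro s
      induction s with
      | zero =>
        intro _
        show posF m' = posF m + q
        omega
      | succ s ihs =>
        intro hs1
        have hDs := ihs (by omega)
        have htop := hletter s (by omega) hDs
        have b1 := posF_succ (m + s)
        have b2 := posF_succ (m' + s)
        rw [htop] at b2
        have r1 : posF (m' + (s + 1)) = posF (m' + s + 1) := rfl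
        have r2 : posF (m + (s + 1)) = posF (m + s + 1) := rfl
        omega
    rcases eq_or_lt_of_le hq'pos with hq1 | hq2
    · -- q' = 1 : a single block, so q = 2 and the factor is "ab"
      have hm1 : m' = m + 1 := by omega
      have hb := posF_succ_le m
      have hbm : posF (m + 1) = j + q := by rw [← hm1]; omega
      have hq2' : q = 2 := by omega
      have hfm : fibWord m = false := by
        by_contra hc
        rw [Bool.not_eq_false] at hc
        have := blen_of_true hc
        omega
      have hj1 : fibWord (j + 1) = true := by
        rw [hm, fibWord_posF_succ m, hfm]
        rfl
      refine ⟨1, 0, ?_⟩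
      rw [List.rotate_zero, hq2', show (2:ℕ) = 1 + 1 from rfl, seg_succ_right, seg_succ_left]
      rw [hj, hj1]
      rfl
    · -- q' ≥ 2 : desubstitute and use the induction hypothesis
      have hqq : q' + 1 ≤ q := by
        have h2 := posF_two_step m
        have h3 : posF (m + 2) + (q' - 2) ≤ posF (m + 2 + (q' - 2)) := posF_add_le _ _
        have h4 : posF (m + 2 + (q' - 2)) = posF m' := by
          rw [show m + 2 + (q' - 2) = m' by omega]
        omega
      have hper' : ∀ t, t + 2 ≤ q' → fibWord (m + t) = fibWord (m + q' + t) := by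
        intro t ht
        have h5 := hletter t ht (aux t (by omega))
        rw [show m + q' + t = m' + t by omega]
        exact h5.symm
      obtain ⟨k, c, hkc⟩ := IH q' (by omega) (by omega) m hper'
      have hsg : sig (seg m q') = seg j q := by
        have h5 := sig_seg (show m ≤ m' by omega)
        rw [← hq', ← hm, show posF m' - j = q by omega] at h5
        exact h5
      have hlen0 : 0 < (Fw k).length := by rw [length_Fw]; exact fn_pos k
      have hrot : (Fw k).rotate (c % (Fw k).length) = (Fw k).rotate c := List.rotate_mod _ _
      refine ⟨k + 1, (sig ((Fw k).take (c % (Fw k).length))).length, ?_⟩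
      rw [← hsg, hkc, ← hrot, sig_rotate _ _ (le_of_lt (Nat.mod_lt _ hlen0)), sig_Fw]
  cases hFj : fibWord j
  · exact key j hFj hper
  · -- the factor starts with b: shift one position left and rotate
    obtain ⟨m, hm, hFm, hm1⟩ := eq_posF_succ_of_true hFj
    have hper' : ∀ t, t + 2 ≤ q → fibWord (posF m + t) = fibWord (posF m + q + t) := by
      intro t ht
      rcases Nat.eq_zero_or_pos t with rfl | htpos
      · have h1 : fibWord (j + q) = true := by
          have h0 := hper 0 (by omega)
          rw [show j + 0 = j from rfl, show j + q + 0 = j + q from rfl] at h0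
          rw [← h0, hFj]
        obtain ⟨m2, hm2, _, _⟩ := eq_posF_succ_of_true h1
        rw [show posF m + 0 = posF m from rfl, show posF m + q + 0 = posF m2 by omega,
            fibWord_posF, fibWord_posF]
      · have h5 := hper (t - 1) (by omega)
        rw [show posF m + t = j + (t - 1) by omega,
            show posF m + q + t = j + q + (t - 1) by omega]
        exact h5
    obtain ⟨k, c, hkc⟩ := key (posF m) (fibWord_posF m) hper'
    obtain ⟨d, rfl⟩ : ∃ d, q = d + 1 := ⟨q - 1, by omega⟩
    have hlast : fibWord (j + d) = false := by
      have h1 : fibWord (j + (d + 1)) = true := by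
        have h0 := hper 0 (by omega)
        rw [show j + 0 = j from rfl, show j + (d + 1) + 0 = j + (d + 1) from rfl] at h0
        rw [← h0, hFj]
      obtain ⟨m2, hm2, _, _⟩ := eq_posF_succ_of_true h1
      rw [show j + d = posF m2 by omega, fibWord_posF]
    have hseg1 : seg (posF m) (d + 1) = fibWord (posF m) :: seg j d := by
      rw [seg_succ_left, show posF m + 1 = j by omega]
    have hseg2 : seg j (d + 1) = seg j d ++ [fibWord (posF m)] := by
      rw [seg_succ_right, hlast, fibWord_posF]
    refine ⟨k, c + 1, ?_⟩
    rw [← List.rotate_rotate, ← hkc, hseg1, hseg2]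
    have h6 := List.rotate_cons_succ (seg j d) (fibWord (posF m)) 0
    rw [show (0:ℕ) + 1 = 1 from rfl, List.rotate_zero] at h6
    rw [h6]


/-! ### Squares occurring in a window -/

lemma infix_seg {u : List Bool} {a n : ℕ} (h : u <:+: seg a n) :
    ∃ j, u = seg j u.length := by
  obtain ⟨s, t, hst⟩ := h
  refine ⟨a + s.length, ?_⟩
  have hlen : s.length + (u.length + t.length) = n := by
    have h0 := congrArg List.length hst
    simp only [List.length_append, length_seg] at h0
    omega
  have h1 : u ++ t = (seg a n).drop s.length := by
    rw [← hst, List.append_assoc]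
    exact List.drop_left.symm
  rw [seg_drop (by omega)] at h1
  have h2 : u = (u ++ t).take u.length := (List.take_left (l₁ := u) (l₂ := t)).symm
  rw [h1, seg_take] at h2
  have h3 : min u.length (n - s.length) = u.length := by omega
  rw [h3] at h2
  exact h2

lemma fFactor_eq_seg (i n : ℕ) : fFactor i n = seg (i - 1) n := rfl

lemma square_root {w : List Bool} (hw : w ≠ []) {i n : ℕ}
    (hinf : w ++ w <:+: fFactor i n) : ∃ k c, w = (Fw k).rotate c := by
  rw [fFactor_eq_seg] at hinf
  obtain ⟨j, hj⟩ := infix_seg hinf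
  set p := w.length with hp
  have hppos : 1 ≤ p := by
    have := List.length_pos_iff.2 hw
    omega
  have hlen2 : (w ++ w).length = p + p := by rw [List.length_append]
  rw [hlen2] at hj
  have ht : List.take p (w ++ w) = w := by rw [hp]; exact List.take_left (l₁ := w) (l₂ := w)
  have hd : List.drop p (w ++ w) = w := by rw [hp]; exact List.drop_left (l₁ := w) (l₂ := w)
  have h1 : w = seg j p := by
    have h := congrArg (List.take p) hj
    rw [ht, seg_take] at h
    rw [h]
    congr 1
    omega
  have h2 : w = seg (j + p) p := by
    have h := congrArg (List.drop p) hj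
    rw [hd, seg_drop (by omega)] at h
    rw [h]
    congr 1
    omega
  have e := h1.symm.trans h2
  have hper : ∀ t, t + 2 ≤ p → fibWord (j + t) = fibWord (j + p + t) := by
    intro t htle
    have h0 := congrArg (fun l => l.getD t false) e
    rw [List.getD_eq_getElem _ _ (by rw [length_seg]; omega),
        List.getD_eq_getElem _ _ (by rw [length_seg]; omega),
        getElem_seg, getElem_seg] at h0
    exact h0
  rcases Nat.lt_or_ge p 2 with hp2 | hp2
  · -- p = 1
    have hp1 : p = 1 := by omega
    have h0 := congrArg (fun l => l.getD 0 false) e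
    rw [List.getD_eq_getElem _ _ (by rw [length_seg]; omega),
        List.getD_eq_getElem _ _ (by rw [length_seg]; omega),
        getElem_seg, getElem_seg] at h0
    -- h0 : fibWord (j + 0) = fibWord (j + p + 0)
    have hFj : fibWord j = false := by
      by_contra hc
      rw [Bool.not_eq_false] at hc
      have hb : fibWord (j + 1) = false := no_bb hc
      rw [show j + 0 = j from rfl, show j + p + 0 = j + 1 by omega, hc, hb] at h0
      exact Bool.noConfusion h0
    refine ⟨0, 0, ?_⟩
    rw [h1, hp1, List.rotate_zero]
    have hseg1 : seg j 1 = [fibWord (j + 0)] := rfl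
    rw [hseg1, show fibWord (j + 0) = false from hFj]
    rfl
  · obtain ⟨k, c, hkc⟩ := seg_conj p hp2 j hper
    exact ⟨k, c, h1.trans hkc⟩

end FibSq

/-- Every factor of the Fibonacci word of length `n` contains fewer than `n`
distinct square factors. -/
theorem distinct_squares_lt_length (i n : ℕ) (hi : 1 ≤ i) (hn : 1 ≤ n) :
    D2 i n < n := by
  classical
  rcases Nat.lt_or_ge n 2 with hn2 | hn2
  · -- n = 1 : no square fits
    have hn1 : n = 1 := by omega
    subst hn1
    have hempty : {w : List Bool | w ≠ [] ∧ (w ++ w) <:+: fFactor i 1} = ∅ := by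
      ext w
      simp only [Set.mem_setOf_eq, Set.mem_empty_iff_false, iff_false, not_and]
      intro hw hinf
      have h1 := hinf.length_le
      have h2 : 1 ≤ w.length := List.length_pos_iff.2 hw
      rw [List.length_append] at h1
      have h3 : (fFactor i 1).length = 1 := by simp [fFactor]
      omega
    unfold D2
    rw [hempty]
    simp
  · -- main case
    set W := fFactor i n with hW
    have hWlen : W.length = n := by simp [hW, fFactor]
    have hfn0 : fn 0 = 1 := rfl
    have hP0 : 2 * fn 0 ≤ n := by omega
    set K := Nat.findGreatest (fun k => 2 * fn k ≤ n) n with hK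
    have hKspec : 2 * fn K ≤ n := by
      rw [hK]
      exact Nat.findGreatest_spec (P := fun k => 2 * fn k ≤ n) (Nat.zero_le n) hP0
    have hKmax : ∀ k, 2 * fn k ≤ n → k ≤ K := by
      intro k hk
      rw [hK]
      exact Nat.le_findGreatest (by have := FibSq.lt_fn k; omega) hk
    set R : ℕ → Finset (List Bool) :=
      fun k => (Finset.range (fn k)).image fun c => (Fw k).rotate c with hR
    set B : Finset (List Bool) :=
      (Finset.range (n + 1 - 2 * fn K)).image fun o => (W.drop o).take (fn K) with hB
    have hsub : {w : List Bool | w ≠ [] ∧ (w ++ w) <:+: W}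
        ⊆ ↑((Finset.range K).biUnion R ∪ B) := by
      rintro w ⟨hw, hinf⟩
      obtain ⟨k, c, hkc⟩ := FibSq.square_root hw hinf
      have hlenw : w.length = fn k := by
        rw [hkc, List.length_rotate, FibSq.length_Fw]
      have h2k : 2 * fn k ≤ n := by
        have h1 := hinf.length_le
        rw [List.length_append, hlenw, hWlen] at h1
        omega
      have hkK := hKmax k h2k
      rw [Finset.mem_coe, Finset.mem_union]
      rcases lt_or_eq_of_le hkK with hlt | heq
      · left
        rw [Finset.mem_biUnion]
        refine ⟨k, Finset.mem_range.2 hlt, ?_⟩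
        rw [Finset.mem_image]
        refine ⟨c % fn k, Finset.mem_range.2 (Nat.mod_lt _ (FibSq.fn_pos k)), ?_⟩
        have hmod : (Fw k).rotate (c % fn k) = (Fw k).rotate c := by
          rw [← FibSq.length_Fw k]
          exact List.rotate_mod _ _
        rw [hkc]
        exact hmod
      · right
        rw [heq] at hlenw
        obtain ⟨st, t, hst⟩ := hinf
        have hlent : st.length + (2 * fn K + t.length) = n := by
          have h0 := congrArg List.length hst
          rw [hWlen] at h0
          simp only [List.length_append, hlenw] at h0
          omega
        rw [Finset.mem_image]
        refine ⟨st.length, Finset.mem_range.2 (by omega), ?_⟩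
        have h9 : W = st ++ ((w ++ w) ++ t) := by
          rw [← hst, List.append_assoc]
        have hdrop : W.drop st.length = (w ++ w) ++ t := by
          rw [h9, List.drop_left]
        have htake : ((w ++ w) ++ t).take (fn K) = w := by
          rw [List.append_assoc, ← hlenw, List.take_left]
        rw [hdrop, htake]
    have hcard : ((Finset.range K).biUnion R ∪ B).card
        ≤ (∑ k ∈ Finset.range K, fn k) + (n + 1 - 2 * fn K) := by
      refine le_trans (Finset.card_union_le _ _) ?_
      have h1 : ((Finset.range K).biUnion R).card ≤ ∑ k ∈ Finset.range K, fn k := by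
        refine le_trans Finset.card_biUnion_le (Finset.sum_le_sum ?_)
        intro k _
        exact le_trans Finset.card_image_le (le_of_eq (Finset.card_range _))
      have h2 : B.card ≤ n + 1 - 2 * fn K :=
        le_trans Finset.card_image_le (le_of_eq (Finset.card_range _))
      omega
    have hsum : ∑ k ∈ Finset.range K, fn k = fn (K + 1) - 2 := by
      have h1 := Nat.fib_succ_eq_succ_sum (K + 2)
      have h2 : ∑ k ∈ Finset.range (K + 2), Nat.fib k
          = (∑ k ∈ Finset.range (K + 1), Nat.fib (k + 1)) + Nat.fib 0 :=
        Finset.sum_range_succ' _ _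
      have h3 : ∑ k ∈ Finset.range (K + 1), Nat.fib (k + 1)
          = (∑ k ∈ Finset.range K, Nat.fib (k + 1 + 1)) + Nat.fib 1 :=
        Finset.sum_range_succ' _ _
      have h4 : ∑ k ∈ Finset.range K, Nat.fib (k + 1 + 1) = ∑ k ∈ Finset.range K, fn k :=
        Finset.sum_congr rfl fun k _ => rfl
      rw [h2, h3, h4] at h1
      have h5 : Nat.fib (K + 2 + 1) = fn (K + 1) := rfl
      have h6 : Nat.fib 0 = 0 := rfl
      have h7 : Nat.fib 1 = 1 := rfl
      omega
    have hD : D2 i n ≤ (∑ k ∈ Finset.range K, fn k) + (n + 1 - 2 * fn K) := by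
      unfold D2
      calc {w : List Bool | w ≠ [] ∧ (w ++ w) <:+: fFactor i n}.ncard
          ≤ (↑((Finset.range K).biUnion R ∪ B) : Set (List Bool)).ncard :=
            Set.ncard_le_ncard hsub (Finset.finite_toSet _)
        _ = ((Finset.range K).biUnion R ∪ B).card := Set.ncard_coe_finset _
        _ ≤ _ := hcard
    have hfib1 : fn (K + 1) ≤ 2 * fn K := by
      have h1 : Nat.fib (K + 1 + 2) = Nat.fib (K + 1) + Nat.fib (K + 1 + 1) :=
        Nat.fib_add_two
      have h2 : Nat.fib (K + 1) ≤ Nat.fib (K + 2) := Nat.fib_mono (by omega)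
      have h3 : fn (K + 1) = Nat.fib (K + 1 + 2) := rfl
      have h4 : fn K = Nat.fib (K + 2) := rfl
      have h5 : Nat.fib (K + 1 + 1) = Nat.fib (K + 2) := rfl
      omega
    have hfib2 : 2 ≤ fn (K + 1) := by
      have h1 : Nat.fib 3 ≤ Nat.fib (K + 1 + 2) := Nat.fib_mono (by omega)
      have h2 : Nat.fib 3 = 2 := rfl
      have h3 : fn (K + 1) = Nat.fib (K + 1 + 2) := rfl
      omega
    rw [hsum] at hD
    omega
end

section
/- For every integer m ≥ 0 and every integer i with 2 ≤ i ≤ f_{m+1}, let w = K_{m+1}[i, f_{m+1}] · K_m · K_{m+1}[1, i−1], a word of length f_{m+2}. Then ww = K_{m+4}[i, 2f_{m+2}+i−1]; in particular, since every kernel word K_m is a factor of the Fibonacci word F, the square ww is a factor of F. -/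
/-- The kernel word `K_m` (`m ≥ 0`): the last letter of `F_{m+1}` followed by
`F_m` with its last letter removed. -/
def kerW (m : ℕ) : List Bool := (Fw (m + 1)).getLast! :: (Fw m).dropLast

/-- `sliceF u i j = u[i,j]`, the (1-indexed) factor of `u` from position `i` to `j`,
with `u[i,i-1] = ε`. -/
def sliceF (u : List Bool) (i j : ℕ) : List Bool := (u.drop (i - 1)).take (j + 1 - i)

open List

lemma getLast!_eq' (l : List Bool) (h : l ≠ []) : l.getLast! = l.getLast h :=
  List.getLast!_of_getLast? (List.getLast?_eq_getLast h)

lemma fn_rec (m : ℕ) : fn (m + 2) = fn (m + 1) + fn m := by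
  show Nat.fib (m + 2 + 2) = Nat.fib (m + 1 + 2) + Nat.fib (m + 2)
  rw [Nat.fib_add_two]
  exact Nat.add_comm _ _

lemma fn_big : ∀ m, m + 1 ≤ fn m
  | 0 => by decide
  | 1 => by decide
  | m + 2 => by have h1 := fn_big (m + 1); have h2 := fn_big m; rw [fn_rec]; omega

lemma Fw_rec (m : ℕ) : Fw (m + 2) = Fw (m + 1) ++ Fw m := rfl

lemma Fw_ne_nil : ∀ m, Fw m ≠ []
  | 0 => by simp [Fw]
  | 1 => by simp [Fw]
  | m + 2 => by simp [Fw_rec, Fw_ne_nil m]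

lemma length_Fw : ∀ m, (Fw m).length = fn m
  | 0 => by decide
  | 1 => by decide
  | m + 2 => by
      rw [Fw_rec, length_append, length_Fw (m + 1), length_Fw m, fn_rec]

lemma dropLast_Fw_ne_nil (m : ℕ) : (Fw (m + 1)).dropLast ≠ [] := by
  intro h
  apply_fun List.length at h
  rw [length_dropLast, length_Fw] at h
  have := fn_big (m + 1)
  simp at h; omega

lemma length_kerW (m : ℕ) : (kerW m).length = fn m := by
  have := fn_big m
  simp [kerW, length_dropLast, length_Fw]; omega

lemma lemA (m : ℕ) : (Fw (m + 1)).dropLast ++ kerW m = (Fw (m + 2)).dropLast := by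
  have h2 := Fw_ne_nil (m + 1)
  rw [Fw_rec, dropLast_append_of_ne_nil (Fw_ne_nil m), kerW, getLast!_eq' _ h2]
  conv_rhs => rw [← dropLast_concat_getLast h2]
  simp

lemma lemA' (m : ℕ) (r : List Bool) :
    (Fw (m + 1)).dropLast ++ (kerW m ++ r) = (Fw (m + 2)).dropLast ++ r := by
  rw [← append_assoc, lemA]

lemma lemC : ∀ m, Fw (m + 1) ++ (Fw (m + 2)).dropLast.dropLast
    = Fw (m + 2) ++ (Fw (m + 1)).dropLast.dropLast
  | 0 => by decide
  | m + 1 => by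
      have ih := lemC m
      have e : (Fw (m + 3)).dropLast.dropLast = Fw (m + 2) ++ (Fw (m + 1)).dropLast.dropLast := by
        rw [Fw_rec (m + 1), dropLast_append_of_ne_nil (Fw_ne_nil (m + 1)),
          dropLast_append_of_ne_nil (dropLast_Fw_ne_nil m)]
      rw [e, Fw_rec (m + 1), append_assoc, ih]

lemma lemX (m : ℕ) :
    (kerW (m + 1) ++ (kerW m ++ (kerW (m + 1) ++ (kerW m ++ kerW (m + 1))))).drop 1
      = Fw (m + 2) ++ (Fw (m + 3)).dropLast := by
  have F3 : (Fw (m + 3)).dropLast = Fw (m + 2) ++ (Fw (m + 1)).dropLast := by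
    rw [show Fw (m + 3) = Fw (m + 2) ++ Fw (m + 1) from rfl,
      dropLast_append_of_ne_nil (Fw_ne_nil (m + 1))]
  have lA2 : (Fw (m + 2)).dropLast ++ kerW (m + 1) = (Fw (m + 3)).dropLast := lemA (m + 1)
  have lA2' : ∀ r : List Bool,
      (Fw (m + 2)).dropLast ++ (kerW (m + 1) ++ r) = (Fw (m + 3)).dropLast ++ r := by
    intro r; rw [← append_assoc, lA2]
  calc (kerW (m + 1) ++ (kerW m ++ (kerW (m + 1) ++ (kerW m ++ kerW (m + 1))))).drop 1
      = (Fw (m + 1)).dropLast ++ (kerW m ++ (kerW (m + 1) ++ (kerW m ++ kerW (m + 1)))) := by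
        simp [kerW]
    _ = (Fw (m + 2)).dropLast ++ (kerW (m + 1) ++ (kerW m ++ kerW (m + 1))) := lemA' m _
    _ = (Fw (m + 3)).dropLast ++ (kerW m ++ kerW (m + 1)) := lA2' _
    _ = Fw (m + 2) ++ ((Fw (m + 1)).dropLast ++ (kerW m ++ kerW (m + 1))) := by
        rw [F3, append_assoc]
    _ = Fw (m + 2) ++ ((Fw (m + 2)).dropLast ++ kerW (m + 1)) := by rw [lemA' m]
    _ = Fw (m + 2) ++ (Fw (m + 3)).dropLast := by rw [lA2]

lemma lemY (m : ℕ) : ∃ g : Bool,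
    (kerW (m + 1) ++ (kerW m ++ (kerW (m + 1) ++ (kerW m ++ kerW (m + 1))))).drop 1
      = (Fw (m + 4)).dropLast.dropLast ++ [g] := by
  have d3 : (Fw (m + 3)).dropLast ≠ [] := dropLast_Fw_ne_nil (m + 2)
  have d2 : (Fw (m + 2)).dropLast ≠ [] := dropLast_Fw_ne_nil (m + 1)
  have c1 : Fw (m + 2) ++ (Fw (m + 3)).dropLast.dropLast
      = Fw (m + 3) ++ (Fw (m + 2)).dropLast.dropLast := lemC (m + 1)
  refine ⟨((Fw (m + 3)).dropLast).getLast d3, ?_⟩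
  rw [lemX]
  conv_lhs => rw [← dropLast_concat_getLast d3]
  rw [show Fw (m + 4) = Fw (m + 3) ++ Fw (m + 2) from rfl,
    dropLast_append_of_ne_nil (Fw_ne_nil (m + 2)),
    dropLast_append_of_ne_nil d2, ← append_assoc, c1]

lemma lemK (m : ℕ) : ∃ g : Bool,
    (kerW (m + 4)).drop 1 = (Fw (m + 4)).dropLast.dropLast ++ [g] := by
  refine ⟨((Fw (m + 4)).dropLast).getLast (dropLast_Fw_ne_nil (m + 3)), ?_⟩
  show (Fw (m + 4)).dropLast = _
  rw [dropLast_concat_getLast (dropLast_Fw_ne_nil (m + 3))]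

lemma slice_mid (Y : List Bool) (g : Bool) (u : List Bool) (hu : u.drop 1 = Y ++ [g])
    (i n : ℕ) (h2 : 2 ≤ i) (hn : i - 2 + n ≤ Y.length) :
    (u.drop (i - 1)).take n = (Y.drop (i - 2)).take n := by
  have h3 : u.drop (i - 1) = (u.drop 1).drop (i - 2) := by
    rw [drop_drop]; congr 1; omega
  rw [h3, hu, drop_append_of_le_length (by omega),
    take_append_of_le_length (by simp [length_drop]; omega)]

lemma Fw_prefix_succ (m : ℕ) : Fw m <+: Fw (m + 1) := by
  match m with
  | 0 => exact ⟨[true], rfl⟩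
  | m + 1 => exact ⟨Fw m, rfl⟩

lemma Fw_prefix {a b : ℕ} (h : a ≤ b) : Fw a <+: Fw b := by
  induction b with
  | zero => rw [Nat.le_zero.mp h]
  | succ b ih =>
      rcases Nat.lt_or_ge a (b + 1) with h' | h'
      · exact (ih (by omega)).trans (Fw_prefix_succ b)
      · rw [show a = b + 1 by omega]

lemma fibWord_eq (N t : ℕ) (ht : t < (Fw N).length) : fibWord t = (Fw N)[t] := by
  have h1 : t < (Fw (t + 1)).length := by
    rw [length_Fw]; have := fn_big (t + 1); omega
  unfold fibWord
  rw [getD_eq_getElem _ _ h1]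
  rcases le_total (t + 1) N with h | h
  · exact (Fw_prefix h).getElem h1
  · exact ((Fw_prefix h).getElem ht).symm

lemma fFactor_eq_slice (N i n : ℕ) (h : i - 1 + n ≤ (Fw N).length) :
    fFactor i n = ((Fw N).drop (i - 1)).take n := by
  apply List.ext_getElem
  · simp [fFactor]; omega
  · intro t h1 h2
    simp only [fFactor, getElem_map, getElem_range, getElem_take, getElem_drop]
    have hlt : t < n := by simpa [fFactor] using h1
    exact fibWord_eq N _ (by omega)

lemma kerW_in_Fw (m : ℕ) :
    kerW m = ((Fw (m + 2)).drop (fn (m + 1) - 1)).take (fn m) := by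
  have h2 := Fw_ne_nil (m + 1)
  have hl : ((Fw (m + 1)).dropLast).length = fn (m + 1) - 1 := by
    rw [length_dropLast, length_Fw]
  have hd : (Fw (m + 1)).drop (fn (m + 1) - 1) = [(Fw (m + 1)).getLast h2] := by
    conv_lhs => rw [← dropLast_concat_getLast h2]
    rw [drop_append_of_le_length (by rw [hl]), ← hl, drop_length, nil_append]
  rw [Fw_rec, drop_append_of_le_length (by rw [length_Fw]; omega), hd]
  obtain ⟨k, hk⟩ : ∃ k, fn m = k + 1 := ⟨fn m - 1, by have := fn_big m; omega⟩
  rw [singleton_append, hk, take_succ_cons, kerW, getLast!_eq' _ h2, dropLast_eq_take, length_Fw,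
    hk, Nat.add_sub_cancel]

/-- Case 1 squares: for `m ≥ 0` and `2 ≤ i ≤ f_{m+1}`, the word
`w = K_{m+1}[i,f_{m+1}] · K_m · K_{m+1}[1,i-1]` has length `f_{m+2}`, and
`ww = K_{m+4}[i, 2f_{m+2}+i-1]`; in particular `ww` is a factor of `F`. -/
theorem square_case_one (m i : ℕ) (h2 : 2 ≤ i) (hi : i ≤ fn (m + 1))
    (w : List Bool)
    (hw : w = sliceF (kerW (m + 1)) i (fn (m + 1)) ++ kerW m ++ sliceF (kerW (m + 1)) 1 (i - 1)) :
    w.length = fn (m + 2) ∧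
    w ++ w = sliceF (kerW (m + 4)) i (2 * fn (m + 2) + i - 1) ∧
    IsFactorF (w ++ w) := by
  have e1 : fn (m + 2) = fn (m + 1) + fn m := fn_rec m
  have e2 : fn (m + 3) = fn (m + 2) + fn (m + 1) := fn_rec (m + 1)
  have e3 : fn (m + 4) = fn (m + 3) + fn (m + 2) := fn_rec (m + 2)
  have e4 : fn (m + 5) = fn (m + 4) + fn (m + 3) := fn_rec (m + 3)
  have e5 : fn (m + 6) = fn (m + 5) + fn (m + 4) := fn_rec (m + 4)
  have b0 : m + 1 ≤ fn m := fn_big m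
  have b1 : m + 2 ≤ fn (m + 1) := fn_big (m + 1)
  have b5 : m + 6 ≤ fn (m + 5) := fn_big (m + 5)
  have hlk1 : (kerW (m + 1)).length = fn (m + 1) := length_kerW _
  -- simplify w
  have hsl1 : sliceF (kerW (m + 1)) i (fn (m + 1)) = (kerW (m + 1)).drop (i - 1) := by
    unfold sliceF
    rw [take_of_length_le (by rw [length_drop, hlk1]; omega)]
  have hsl2 : sliceF (kerW (m + 1)) 1 (i - 1) = (kerW (m + 1)).take (i - 1) := by
    unfold sliceF; simp
  have hw' : w = (kerW (m + 1)).drop (i - 1) ++ kerW m ++ (kerW (m + 1)).take (i - 1) := by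
    rw [hw, hsl1, hsl2]
  have hlen : w.length = fn (m + 2) := by
    rw [hw']
    simp only [length_append, length_drop, length_take, hlk1, length_kerW]
    omega
  -- the big word X
  set X : List Bool := kerW (m + 1) ++ (kerW m ++ (kerW (m + 1) ++ (kerW m ++ kerW (m + 1)))) with hX
  have hXd : X.drop (i - 1)
      = (kerW (m + 1)).drop (i - 1) ++ (kerW m ++ (kerW (m + 1) ++ (kerW m ++ kerW (m + 1)))) :=
    drop_append_of_le_length (by rw [hlk1]; omega)
  have tpd' : (kerW (m + 1)).take (i - 1) ++ (kerW (m + 1)).drop (i - 1) = kerW (m + 1) :=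
    take_append_drop _ _
  have tpd : ∀ z : List Bool,
      (kerW (m + 1)).take (i - 1) ++ ((kerW (m + 1)).drop (i - 1) ++ z) = kerW (m + 1) ++ z := by
    intro z; rw [← append_assoc, tpd']
  have h1 : (w ++ w) ++ (kerW (m + 1)).drop (i - 1) = X.drop (i - 1) := by
    rw [hw', hXd]
    simp only [append_assoc]
    rw [tpd', tpd]
  have hwwlen : (w ++ w).length = 2 * fn (m + 2) := by
    rw [length_append, hlen]; omega
  have hww : w ++ w = (X.drop (i - 1)).take (2 * fn (m + 2)) := by
    rw [← h1, take_append_of_le_length (by omega), take_of_length_le (by omega)]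
  -- middle comparison
  obtain ⟨g, hg⟩ := lemY m
  obtain ⟨g', hg'⟩ := lemK m
  have hYlen : ((Fw (m + 4)).dropLast.dropLast).length = fn (m + 4) - 2 := by
    rw [length_dropLast, length_dropLast, length_Fw]
    omega
  have hs1 : (X.drop (i - 1)).take (2 * fn (m + 2))
      = (((Fw (m + 4)).dropLast.dropLast).drop (i - 2)).take (2 * fn (m + 2)) :=
    slice_mid _ g X hg i _ h2 (by rw [hYlen]; omega)
  have hs2 : ((kerW (m + 4)).drop (i - 1)).take (2 * fn (m + 2))
      = (((Fw (m + 4)).dropLast.dropLast).drop (i - 2)).take (2 * fn (m + 2)) :=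
    slice_mid _ g' _ hg' i _ h2 (by rw [hYlen]; omega)
  have hslice : sliceF (kerW (m + 4)) i (2 * fn (m + 2) + i - 1)
      = ((kerW (m + 4)).drop (i - 1)).take (2 * fn (m + 2)) := by
    unfold sliceF; congr 1; omega
  have part2 : w ++ w = sliceF (kerW (m + 4)) i (2 * fn (m + 2) + i - 1) := by
    rw [hslice, hs2, ← hs1, ← hww]
  refine ⟨hlen, part2, ?_⟩
  -- occurrence in the infinite word
  have hker : kerW (m + 4) = ((Fw (m + 6)).drop (fn (m + 5) - 1)).take (fn (m + 4)) :=
    kerW_in_Fw (m + 4)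
  have hwwK : w ++ w = ((kerW (m + 4)).drop (i - 1)).take (2 * fn (m + 2)) := by
    rw [hs2, ← hs1, ← hww]
  have hlF : (Fw (m + 6)).length = fn (m + 6) := length_Fw _
  refine ⟨fn (m + 5) + (i - 1), by omega, ?_⟩
  rw [hwwlen, fFactor_eq_slice (m + 6) _ _ (by rw [hlF]; omega), hwwK, hker,
    drop_take, take_take, min_eq_left (by omega), drop_drop]
  rw [show fn (m + 5) - 1 + (i - 1) = fn (m + 5) + (i - 1) - 1 from by omega]
end

section
/- For every integer m ≥ 0, the position sequence Of^{2,m} of squares of length 2f_m equals the Fibonacci word F(R_a, R_b) over the two blocks R_a = [1, 2, …, f_{m−1}−1, 0, 0, …, 0] (the increasing run 1,…,f_{m−1}−1 followed by f_m+1 zeros, so |R_a| = f_{m+1}) and R_b = [1, 2, …, f_m] (so |R_b| = f_m). -/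
/-- The first `N` blocks of `F(R_a,R_b)`: the Fibonacci word with each letter `a`
replaced by the block `R_a` and each `b` by `R_b`. -/
def substBlocks {α : Type*} (Ra Rb : List α) (N : ℕ) : List α :=
  ((List.range N).map fun t => if fibWord t = false then Ra else Rb).flatten

/-- The `i`-th letter (0-indexed) of the infinite word `F(R_a,R_b)`,
with default `d` (irrelevant when `R_a`, `R_b` are nonempty). -/
def substLetter {α : Type*} (Ra Rb : List α) (d : α) (i : ℕ) : α :=
  (substBlocks Ra Rb (i + 1)).getD i d

open Classical in
/-- `Of2 m i`: the position sequence of squares of length `2f_m` (1-indexed in `i`):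
it equals `j` if `F[i;2f_m] = F[j;2f_m]` for some `1 ≤ j ≤ f_{m-1}-1`, equals `j` if
`F[i;2f_m] = F[f_{m+1}+j;2f_m]` for some `f_{m-1} ≤ j ≤ f_m`, and `0` otherwise. -/
noncomputable def Of2 (m i : ℕ) : ℕ :=
  if h : ∃ j, 1 ≤ j ∧ j ≤ Nat.fib (m + 1) - 1 ∧
      fFactor i (2 * fn m) = fFactor j (2 * fn m) then h.choose
  else if h' : ∃ j, Nat.fib (m + 1) ≤ j ∧ j ≤ fn m ∧
      fFactor i (2 * fn m) = fFactor (fn (m + 1) + j) (2 * fn m) then h'.choose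
  else 0

lemma fn_add_two (k : ℕ) : fn (k + 2) = fn (k + 1) + fn k := by
  simp [fn, Nat.fib_add_two]; ring

lemma fn_pos (k : ℕ) : 0 < fn k := Nat.fib_pos.2 (by omega)

lemma lt_fn (k : ℕ) : k < fn k := by
  induction k using Nat.twoStepInduction with
  | zero => decide
  | one => decide
  | more k ih _ => have := fn_pos (k+1); have := fn_add_two k; omega

lemma fn_lt_succ (k : ℕ) : fn k < fn (k + 1) := by
  cases k with
  | zero => decide
  | succ k => have h1 : fn (k+1+1) = fn (k+1) + fn k := fn_add_two k; have := fn_pos k; omega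

lemma fn_le_of_le {k l : ℕ} (h : k ≤ l) : fn k ≤ fn l := by
  induction l with
  | zero => simp_all
  | succ l ih =>
    rcases Nat.lt_or_ge k (l+1) with h'|h'
    · exact le_trans (ih (by omega)) (le_of_lt (fn_lt_succ l))
    · have : k = l + 1 := by omega
      simp [this]

lemma Fw_length (k : ℕ) : (Fw k).length = fn k := by
  induction k using Nat.twoStepInduction with
  | zero => decide
  | one => decide
  | more k ih ih2 => simp [Fw, fn_add_two, ih, ih2]

lemma Fw_prefix_s7 (k : ℕ) : Fw k <+: Fw (k + 1) := by
  match k with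
  | 0 => exact ⟨[true], rfl⟩
  | 1 => exact ⟨Fw 0, rfl⟩
  | k + 2 => exact ⟨Fw (k+1), rfl⟩

lemma Fw_prefix_le {k l : ℕ} (h : k ≤ l) : Fw k <+: Fw l := by
  induction l with
  | zero => simp [Nat.le_zero.1 h]
  | succ l ih =>
    rcases Nat.lt_or_ge k (l+1) with h'|h'
    · exact (ih (by omega)).trans (Fw_prefix_s7 l)
    · have : k = l + 1 := by omega
      simp [this]

lemma fibWord_eq_s7 {i k : ℕ} (h : i < fn k) : fibWord i = (Fw k).getD i false := by
  rcases Nat.le_total k (i+1) with hk|hk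
  · obtain ⟨t, ht⟩ := Fw_prefix_le hk
    rw [fibWord, ← ht, List.getD_append _ _ _ _ (by rw [Fw_length]; omega)]
  · obtain ⟨t, ht⟩ := Fw_prefix_le hk
    rw [fibWord, ← ht, List.getD_append _ _ _ _ (by rw [Fw_length]; exact lt_of_lt_of_le (lt_fn i) (fn_le_of_le (by omega)))]
lemma P0 {k s : ℕ} (h : s < fn k) : fibWord (fn (k + 1) + s) = fibWord s := by
  have h2 : fn (k + 2) = fn (k + 1) + fn k := fn_add_two k
  rw [fibWord_eq_s7 (k := k + 2) (by omega), fibWord_eq_s7 (k := k) h]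
  show (Fw (k+1) ++ Fw k).getD _ _ = _
  rw [List.getD_append_right _ _ _ _ (by rw [Fw_length]; omega), Fw_length]
  congr 1; omega

lemma P1 : ∀ k, ∀ s, s + 2 < fn (k + 1) → fibWord (fn k + s) = fibWord s := by
  intro k
  induction k using Nat.twoStepInduction with
  | zero => intro s h; have : fn (0+1) = 2 := rfl; omega
  | one => intro s h
           have : fn (1+1) = 3 := rfl
           have hs : s = 0 := by omega
           subst hs; decide
  | more k _ ih1 =>
    intro s h
    have h3 : fn (k + 3) = fn (k + 2) + fn (k + 1) := fn_add_two (k + 1)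
    have h2 : fn (k + 2) = fn (k + 1) + fn k := fn_add_two k
    have h4 : fn (k + 2 + 1) = fn (k + 3) := rfl
    have h5 : fn (k + 1 + 1) = fn (k + 2) := rfl
    rcases Nat.lt_or_ge s (fn (k + 1)) with hs | hs
    · exact P0 (k := k + 1) hs
    · set v := s - fn (k + 1) with hv
      have hsv : s = fn (k + 1) + v := by omega
      have hvlt : v < fn (k + 2) := by omega
      have e1 : fibWord (fn (k + 2) + s) = fibWord v := by
        rw [show fn (k+2) + s = fn (k + 2 + 1) + v by omega]
        exact P0 (k := k + 2) hvlt
      have e2 : fibWord s = fibWord v := by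
        rw [hsv]; exact ih1 v (by omega)
      rw [e1, e2]

lemma H1 : ∀ u k, u + 3 ≤ fn (k + 1) + fn k → fibWord u = fibWord (u % fn k) := by
  intro u
  induction u using Nat.strong_induction_on with
  | _ u ih =>
    intro k h
    rcases Nat.lt_or_ge u (fn k) with hu | hu
    · rw [Nat.mod_eq_of_lt hu]
    · have hpos := fn_pos k
      have e1 : fibWord u = fibWord (u - fn k) := by
        conv_lhs => rw [show u = fn k + (u - fn k) by omega]
        exact P1 k (u - fn k) (by omega)
      rw [e1, ih (u - fn k) (by omega) k (by omega), Nat.mod_eq_sub_mod hu]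
def bsize (k t : ℕ) : ℕ := if fibWord t then fn k else fn (k + 1)

def Pos (k t : ℕ) : ℕ := ∑ s ∈ Finset.range t, bsize k s

def blk (k : ℕ) (c : Bool) : List Bool := if c then Fw k else Fw (k + 1)

lemma Pos_succ (k t : ℕ) : Pos k (t + 1) = Pos k t + bsize k t :=
  Finset.sum_range_succ _ _

lemma fn_le_bsize (k t : ℕ) : fn k ≤ bsize k t := by
  rw [bsize]; split
  · exact le_refl _
  · exact le_of_lt (fn_lt_succ k)

lemma bsize_le (k t : ℕ) : bsize k t ≤ fn (k + 1) := by
  rw [bsize]; split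
  · exact le_of_lt (fn_lt_succ k)
  · exact le_refl _

lemma bsize_pos (k t : ℕ) : 0 < bsize k t := lt_of_lt_of_le (fn_pos k) (fn_le_bsize k t)

lemma blk_length (k : ℕ) (c : Bool) : (blk k c).length = if c then fn k else fn (k + 1) := by
  rw [blk]; split <;> exact Fw_length _

lemma Pos_mono (k : ℕ) {t t' : ℕ} (h : t ≤ t') : Pos k t ≤ Pos k t' :=
  Finset.sum_le_sum_of_subset (Finset.range_subset_range.2 h)

lemma flatten_ident : ∀ n k, Fw (n + k + 1) = ((Fw n).map (blk k)).flatten := by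
  intro n
  induction n using Nat.twoStepInduction with
  | zero => intro k; rw [show 0 + k + 1 = k + 1 by omega]; simp [Fw, blk]
  | one => intro k
           rw [show 1 + k + 1 = (k + 1) + 1 by omega]
           have : Fw (k + 1 + 1) = Fw (k + 1) ++ Fw k := rfl
           rw [this]; simp [Fw, blk]
  | more n ih ih1 =>
    intro k
    have e1 : Fw (n + 2 + k + 1) = Fw (n + 1 + k + 1) ++ Fw (n + k + 1) := by
      rw [show n + 2 + k + 1 = (n + k + 1) + 2 by omega,
          show n + 1 + k + 1 = (n + k + 1) + 1 by omega]
      rfl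
    rw [e1, ih k, ih1 k]
    show _ = ((Fw (n+1) ++ Fw n).map (blk k)).flatten
    rw [List.map_append, List.flatten_append]

lemma flatten_getD {α : Type*} (d : α) :
    ∀ (L : List (List α)) (t r : ℕ), r < (L.getD t []).length →
    L.flatten.getD (((L.take t).flatten).length + r) d = (L.getD t []).getD r d := by
  intro L
  induction L with
  | nil => intro t r hr; simp [List.getD] at hr
  | cons x L ih =>
    intro t r hr
    cases t with
    | zero =>
      simp only [List.take_zero, List.flatten_nil, List.length_nil, Nat.zero_add,
        List.flatten_cons, List.getD_cons_zero] at hr ⊢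
      exact List.getD_append _ _ _ _ hr
    | succ t =>
      simp only [List.getD_cons_succ] at hr ⊢
      simp only [List.take_succ_cons, List.flatten_cons, List.length_append]
      rw [show x.length + (List.take t L).flatten.length + r
          = x.length + ((List.take t L).flatten.length + r) by omega]
      rw [List.getD_append_right _ _ _ _ (by omega)]
      rw [show x.length + ((List.take t L).flatten.length + r) - x.length
          = (List.take t L).flatten.length + r by omega]
      exact ih t r hr

lemma Fw_getD {t n : ℕ} (h : t < fn n) : (Fw n).getD t false = fibWord t :=
  (fibWord_eq_s7 h).symm

lemma Fw_getElem {t n : ℕ} (h : t < fn n) (h' : t < (Fw n).length) :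
    (Fw n)[t] = fibWord t := by
  rw [← List.getD_eq_getElem _ false h', Fw_getD h]

lemma take_flatten_len {n k : ℕ} : ∀ t, t ≤ fn n →
    ((((Fw n).map (blk k)).take t).flatten).length = Pos k t := by
  intro t
  induction t with
  | zero => simp [Pos]
  | succ t ih =>
    intro ht
    have hlen : t < ((Fw n).map (blk k)).length := by
      rw [List.length_map, Fw_length]; omega
    rw [List.take_succ, List.flatten_append, List.length_append, ih (by omega), Pos_succ]
    congr 1
    rw [List.getElem?_eq_getElem hlen]
    simp only [Option.toList_some, List.flatten_cons, List.flatten_nil, List.append_nil,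
      List.getElem_map]
    have htn : t < fn n := by rw [List.length_map, Fw_length] at hlen; omega
    rw [blk_length, Fw_getElem htn (by rw [Fw_length]; omega), bsize]

lemma FactA {k t r : ℕ} (hr : r < bsize k t) : fibWord (Pos k t + r) = fibWord r := by
  have htn : t < fn t := lt_fn t
  have hLlen : ((Fw t).map (blk k)).length = fn t := by rw [List.length_map, Fw_length]
  have htotal : (((Fw t).map (blk k)).flatten).length = fn (t + k + 1) := by
    rw [← flatten_ident t k, Fw_length]
  have h2 : Pos k (fn t) = fn (t + k + 1) := by
    have h3 := take_flatten_len (n := t) (k := k) (fn t) le_rfl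
    rw [← h3, ← htotal, ← hLlen, List.take_length]
  have hb : Pos k t + r < fn (t + k + 1) := by
    have h4 : Pos k (t + 1) ≤ Pos k (fn t) := Pos_mono k (by omega)
    have h5 := Pos_succ k t
    omega
  have hgd : t < ((Fw t).map (blk k)).length := by omega
  have h6 := take_flatten_len (n := t) (k := k) t (by omega)
  have hblk : ((Fw t).map (blk k)).getD t [] = blk k (fibWord t) := by
    rw [List.getD_eq_getElem _ _ hgd, List.getElem_map,
        Fw_getElem htn (by rw [Fw_length]; exact htn)]
  have hrlen : r < (((Fw t).map (blk k)).getD t []).length := by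
    rw [hblk, blk_length]
    rw [bsize] at hr
    exact hr
  calc fibWord (Pos k t + r)
      = (Fw (t + k + 1)).getD (Pos k t + r) false := fibWord_eq_s7 hb
    _ = (((Fw t).map (blk k)).flatten).getD (Pos k t + r) false := by
        rw [flatten_ident t k]
    _ = (((Fw t).map (blk k)).flatten).getD
          (((((Fw t).map (blk k)).take t).flatten).length + r) false := by rw [h6]
    _ = (((Fw t).map (blk k)).getD t []).getD r false := flatten_getD false _ t r hrlen
    _ = fibWord r := by
        rw [hblk, blk]
        rw [bsize] at hr
        cases hft : fibWord t with
        | true => rw [hft] at hr; simp only [if_true] at hr ⊢; exact Fw_getD hr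
        | false => rw [hft] at hr; simp only [Bool.false_eq_true, if_false] at hr ⊢; exact Fw_getD hr
lemma exists_decomp (k x : ℕ) : ∃ t r, r < bsize k t ∧ x = Pos k t + r := by
  induction x with
  | zero => exact ⟨0, 0, bsize_pos k 0, by simp [Pos]⟩
  | succ x ih =>
    obtain ⟨t, r, hr, hx⟩ := ih
    rcases Nat.lt_or_ge (r + 1) (bsize k t) with h | h
    · exact ⟨t, r + 1, h, by omega⟩
    · refine ⟨t + 1, 0, bsize_pos k (t+1), ?_⟩
      rw [Pos_succ]
      omega

lemma fibWord_zero : fibWord 0 = false := by decide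
lemma fibWord_one : fibWord 1 = true := by decide
lemma fibWord_two : fibWord 2 = false := by decide

lemma FactC {t : ℕ} (h : fibWord t = true) : fibWord (t + 1) = false := by
  obtain ⟨t', r', hr', ht⟩ := exists_decomp 0 t
  have hA := FactA (k := 0) (t := t') (r := r') hr'
  rw [← ht, h] at hA
  rw [bsize] at hr'
  have hf0 : fn 0 = 1 := rfl
  have hf1 : fn (0 + 1) = 2 := rfl
  cases hw : fibWord t' with
  | true =>
    rw [hw] at hr'
    simp only [hf0] at hr'
    rw [if_true] at hr'
    have : r' = 0 := by omega
    rw [this, fibWord_zero] at hA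
    exact absurd hA.symm (by simp)
  | false =>
    rw [hw] at hr'
    simp only [Bool.false_eq_true, if_false, hf1] at hr'
    have hr1 : r' = 1 := by
      rcases (by omega : r' = 0 ∨ r' = 1) with h0 | h1
      · rw [h0, fibWord_zero] at hA; exact absurd hA.symm (by simp)
      · exact h1
    have : t + 1 = Pos 0 (t' + 1) + 0 := by
      rw [Pos_succ, bsize, hw]
      simp only [Bool.false_eq_true, if_false, hf1]
      omega
    rw [this, FactA (by rw [bsize]; split <;> simp [fn_pos] <;> exact fn_pos _), fibWord_zero]

lemma last2 : ∀ j, 1 ≤ j → j ≤ 2 → ∀ k, 1 ≤ k → j ≤ fn k →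
    fibWord (fn (k + 1) - j) ≠ fibWord (fn k - j) := by
  have key : ∀ k j, 1 ≤ j → j ≤ fn k → fibWord (fn (k + 2) - j) = fibWord (fn k - j) := by
    intro k j h1 h2
    have h3 : fn (k + 2) = fn (k + 1) + fn k := fn_add_two k
    rw [show fn (k + 2) - j = fn (k + 1) + (fn k - j) by omega]
    exact P0 (by have := fn_pos k; omega)
  intro j hj1 hj2
  intro k
  induction k using Nat.twoStepInduction with
  | zero => intro h; omega
  | one =>
    intro _ hjf
    have hf1 : fn 1 = 2 := rfl
    have hf2 : fn (1 + 1) = 3 := rfl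
    interval_cases j
    · rw [show fn (1+1) - 1 = 2 from rfl, show fn 1 - 1 = 1 from rfl, fibWord_two, fibWord_one]
      simp
    · rw [show fn (1+1) - 2 = 1 from rfl, show fn 1 - 2 = 0 from rfl, fibWord_one, fibWord_zero]
      simp
  | more k ih _ =>
    intro _ hjf
    have h2k1 : (2:ℕ) ≤ fn (k + 1) := by
      have := fn_le_of_le (show 1 ≤ k + 1 by omega)
      rw [show fn 1 = 2 from rfl] at this; exact this
    have hjk : j ≤ fn (k + 1) := le_trans hj2 h2k1
    rcases Nat.eq_zero_or_pos k with rfl | hk0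
    · -- k = 0 : goal about fn 3 - j vs fn 2 - j
      have hf2 : fn (0 + 2) = 3 := rfl
      have hf3 : fn (0 + 2 + 1) = 5 := rfl
      interval_cases j
      · rw [show fn (0+2+1) - 1 = 4 from rfl, show fn (0+2) - 1 = 2 from rfl]
        rw [show fibWord 4 = true by decide, fibWord_two]; simp
      · rw [show fn (0+2+1) - 2 = 3 from rfl, show fn (0+2) - 2 = 1 from rfl]
        rw [show fibWord 3 = false by decide, fibWord_one]; simp
    · have h2k : (2:ℕ) ≤ fn k := by
        have := fn_le_of_le (show 1 ≤ k by omega)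
        rw [show fn 1 = 2 from rfl] at this; exact this
      have hjk' : j ≤ fn k := le_trans hj2 h2k
      have e1 : fibWord (fn (k + 2 + 1) - j) = fibWord (fn (k + 1) - j) := by
        rw [show k + 2 + 1 = k + 1 + 2 by omega]
        exact key (k + 1) j hj1 hjk
      have e2 : fibWord (fn (k + 2) - j) = fibWord (fn k - j) := key k j hj1 hjk'
      rw [e1, e2]
      exact ih hk0 hjk'
lemma fn_succ_eq (m : ℕ) : fn (m + 1) = fn m + Nat.fib (m + 1) := by
  show Nat.fib (m + 3) = Nat.fib (m + 2) + Nat.fib (m + 1)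
  rw [show m + 3 = (m + 1) + 2 by omega, Nat.fib_add_two]
  have : Nat.fib (m + 1 + 1) = Nat.fib (m + 2) := rfl
  omega

lemma fib_succ_pos (m : ℕ) : 0 < Nat.fib (m + 1) := Nat.fib_pos.2 (by omega)

lemma LemW {m t r : ℕ} (hr : r < bsize m t)
    (ha : fibWord t = false → r + 2 ≤ Nat.fib (m + 1)) :
    ∀ s, s < 2 * fn m → fibWord (Pos m t + (r + s)) = fibWord ((r + s) % fn m) := by
  intro s hs
  have hfib := fn_succ_eq m
  have hfpos := fib_succ_pos m
  have hmpos := fn_pos m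
  have hlt := fn_lt_succ m
  set u := r + s with hu
  cases hw : fibWord t with
  | false =>
    have hbs : bsize m t = fn (m + 1) := by rw [bsize, hw]; simp
    have hub : u + 3 ≤ fn (m + 1) + fn m := by
      have := ha hw; omega
    rcases Nat.lt_or_ge u (fn (m + 1)) with h1 | h1
    · rw [FactA (by omega : u < bsize m t)]
      exact H1 u m hub
    · set v := u - fn (m + 1) with hv
      have hvb : v + 3 ≤ fn m := by omega
      have e0 : Pos m t + u = Pos m (t + 1) + v := by rw [Pos_succ]; omega
      have e1 : fibWord (Pos m (t + 1) + v) = fibWord v :=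
        FactA (lt_of_lt_of_le (by omega : v < fn m) (fn_le_bsize m (t + 1)))
      have e2 : fibWord v = fibWord (fn (m + 1) + v) := (P0 (by omega)).symm
      have e3 : fibWord (fn (m + 1) + v) = fibWord ((fn (m + 1) + v) % fn m) :=
        H1 _ m (by omega)
      rw [e0, e1, e2, e3, show fn (m + 1) + v = u by omega]
  | true =>
    have hbs : bsize m t = fn m := by rw [bsize, hw]; simp
    have hc : fibWord (t + 1) = false := FactC hw
    have hbs1 : bsize m (t + 1) = fn (m + 1) := by rw [bsize, hc]; simp
    have hub : u ≤ 3 * fn m - 2 := by omega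
    rcases Nat.lt_or_ge u (fn m) with h1 | h1
    · rw [FactA (by omega : u < bsize m t), Nat.mod_eq_of_lt h1]
    rcases Nat.lt_or_ge u (fn m + fn (m + 1)) with h2 | h2
    · set v := u - fn m with hv
      have e0 : Pos m t + u = Pos m (t + 1) + v := by rw [Pos_succ]; omega
      have e1 : fibWord (Pos m (t + 1) + v) = fibWord v := FactA (by omega)
      have e3 : fibWord v = fibWord (v % fn m) := H1 v m (by omega)
      rw [e0, e1, e3, show u = fn m + v by omega, Nat.add_mod_left]
    · set v := u - fn m - fn (m + 1) with hv
      have hvb : v + 3 ≤ fn m := by omega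
      have e0 : Pos m t + u = Pos m (t + 2) + v := by
        rw [show t + 2 = (t + 1) + 1 from rfl, Pos_succ, Pos_succ]; omega
      have e1 : fibWord (Pos m (t + 2) + v) = fibWord v :=
        FactA (lt_of_lt_of_le (by omega : v < fn m) (fn_le_bsize m (t + 2)))
      have e2 : fibWord v = fibWord (fn (m + 1) + v) := (P0 (by omega)).symm
      have e3 : fibWord (fn (m + 1) + v) = fibWord ((fn (m + 1) + v) % fn m) :=
        H1 _ m (by omega)
      rw [e0, e1, e2, e3]
      rw [show u = fn m + (fn (m + 1) + v) by omega, Nat.add_mod_left]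

lemma LemZ {m t r : ℕ} (hw : fibWord t = false) (hr1 : Nat.fib (m + 1) - 1 ≤ r)
    (hr2 : r < fn (m + 1)) :
    ∃ s, s < fn m ∧ fibWord (Pos m t + r + s) ≠ fibWord (Pos m t + r + s + fn m) := by
  have hfib := fn_succ_eq m
  have hfpos := fib_succ_pos m
  have hmpos := fn_pos m
  have hbs : bsize m t = fn (m + 1) := by rw [bsize, hw]; simp
  have hnext : fn m ≤ bsize m (t + 1) := fn_le_bsize m (t + 1)
  rcases Nat.eq_zero_or_pos m with rfl | hm
  · -- m = 0
    have hf0 : fn 0 = 1 := rfl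
    have hf1 : fn (0 + 1) = 2 := rfl
    refine ⟨0, by omega, ?_⟩
    have hr01 : r = 0 ∨ r = 1 := by omega
    rcases hr01 with rfl | rfl
    · rw [show Pos 0 t + 0 + 0 = Pos 0 t + 0 by omega, FactA (by omega),
          show Pos 0 t + 0 + 0 + fn 0 = Pos 0 t + 1 by omega, FactA (by omega),
          fibWord_zero, fibWord_one]
      simp
    · rw [show Pos 0 t + 1 + 0 = Pos 0 t + 1 by omega, FactA (by omega),
          show Pos 0 t + 1 + 0 + fn 0 = Pos 0 (t + 1) + 0 by rw [Pos_succ]; omega,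
          FactA (by omega), fibWord_one, fibWord_zero]
      simp
  · have h2fn : 2 ≤ fn m := by
      have := fn_le_of_le (show 1 ≤ m by omega)
      rw [show fn 1 = 2 from rfl] at this; exact this
    rcases Nat.lt_or_ge r (fn (m + 1) - 1) with hc | hc
    · -- r ≤ fn (m+1) - 2, take s = fn (m+1) - 2 - r
      refine ⟨fn (m + 1) - 2 - r, by omega, ?_⟩
      rw [show Pos m t + r + (fn (m + 1) - 2 - r) = Pos m t + (fn (m + 1) - 2) by omega,
          FactA (by omega),
          show Pos m t + (fn (m + 1) - 2) + fn m = Pos m (t + 1) + (fn m - 2) by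
            rw [Pos_succ]; omega,
          FactA (by omega)]
      exact last2 2 (by omega) (by omega) m (by omega) (by omega)
    · -- r = fn (m+1) - 1, take s = 0
      have hre : r = fn (m + 1) - 1 := by omega
      refine ⟨0, by omega, ?_⟩
      rw [hre,
          show Pos m t + (fn (m + 1) - 1) + 0 = Pos m t + (fn (m + 1) - 1) by omega,
          FactA (by omega),
          show Pos m t + (fn (m + 1) - 1) + fn m = Pos m (t + 1) + (fn m - 1) by
            rw [Pos_succ]; omega,
          FactA (by omega)]
      exact last2 1 (by omega) (by omega) m (by omega) (by omega)
lemma count_fib : ∀ k, (∑ y ∈ Finset.range (fn k), (if fibWord y then 1 else 0)) = Nat.fib k := by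
  intro k
  induction k using Nat.twoStepInduction with
  | zero =>
    rw [show fn 0 = 1 from rfl]
    rw [Finset.sum_range_one, fibWord_zero]
    rfl
  | one =>
    rw [show fn 1 = 2 from rfl, Finset.sum_range_succ, Finset.sum_range_one,
        fibWord_zero, fibWord_one]
    rfl
  | more k ih ih1 =>
    rw [fn_add_two, Finset.sum_range_add, ih1]
    have : ∀ x ∈ Finset.range (fn k), (if fibWord (fn (k + 1) + x) then 1 else 0)
        = (if fibWord x then 1 else 0) := by
      intro x hx
      rw [P0 (Finset.mem_range.1 hx)]
    rw [Finset.sum_congr rfl this, ih, show k + 2 = k + 1 + 1 from rfl, Nat.fib_add_two]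
    omega

lemma RotInj_aux {m p q : ℕ} (hpq : p ≤ q) (hp : p < fn m) (hq : q < fn m)
    (h : ∀ s, s < fn m → fibWord ((p + s) % fn m) = fibWord ((q + s) % fn m)) : p = q := by
  by_contra hne
  set n := fn m with hn
  have hnpos : 0 < n := fn_pos m
  set d := q - p with hd
  have hd0 : 0 < d := by omega
  have hdn : d < n := by omega
  -- shift invariance
  have hshift : ∀ y, fibWord (y % n) = fibWord ((y + d) % n) := by
    intro y
    have hs : (y + n - p) % n < n := Nat.mod_lt _ hnpos
    have h1 : (p + (y + n - p) % n) % n = y % n := by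
      have e1 : (p + (y + n - p) % n) % n = (p + (y + n - p)) % n := by
        rw [Nat.add_mod, Nat.mod_mod_of_dvd _ (dvd_refl n), ← Nat.add_mod]
      rw [e1, show p + (y + n - p) = y + n by omega, Nat.add_mod_right]
    have h2 : (q + (y + n - p) % n) % n = (y + d) % n := by
      have e1 : (q + (y + n - p) % n) % n = (q + (y + n - p)) % n := by
        rw [Nat.add_mod, Nat.mod_mod_of_dvd _ (dvd_refl n), ← Nat.add_mod]
      rw [e1, show q + (y + n - p) = (y + d) + n by omega, Nat.add_mod_right]
    have := h ((y + n - p) % n) hs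
    rw [h1, h2] at this
    exact this
  have hiter : ∀ c y, fibWord (y % n) = fibWord ((y + c * d) % n) := by
    intro c
    induction c with
    | zero => intro y; simp
    | succ c ih =>
      intro y
      rw [ih y, show y + (c + 1) * d = (y + c * d) + d by ring, ← hshift (y + c * d)]
  -- Bezout
  set g := Nat.gcd d n with hg
  have hgpos : 0 < g := Nat.gcd_pos_of_pos_left _ hd0
  have hgdvd : g ∣ n := Nat.gcd_dvd_right d n
  have hgd : g ≤ d := Nat.le_of_dvd hd0 (Nat.gcd_dvd_left d n)
  obtain ⟨a, _, had⟩ := Nat.exists_mul_mod_eq_gcd (show Nat.gcd d n < n by omega)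
  have hgshift : ∀ y, fibWord (y % n) = fibWord ((y + g) % n) := by
    intro y
    rw [hiter a y]
    congr 1
    have : a * d = d * a := by ring
    rw [Nat.add_mod, this, had, ← hg, Nat.add_mod y g n, Nat.mod_eq_of_lt (show g < n by omega)]
  have hgiter : ∀ c y, fibWord (y % n) = fibWord ((y + c * g) % n) := by
    intro c
    induction c with
    | zero => intro y; simp
    | succ c ih =>
      intro y
      rw [ih y, show y + (c + 1) * g = (y + c * g) + g by ring, ← hgshift (y + c * g)]
  have hperiod : ∀ y, y < n → fibWord y = fibWord (y % g) := by
    intro y hy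
    have h1 := hgiter (y / g) (y % g)
    rw [Nat.mod_eq_of_lt (lt_of_lt_of_le (Nat.mod_lt y hgpos) (Nat.le_of_dvd hnpos hgdvd)),
        Nat.mod_add_div' y g, Nat.mod_eq_of_lt hy] at h1
    exact h1.symm
  -- counting
  set e := n / g with he
  have hne' : n = g * e := (Nat.div_mul_cancel hgdvd).symm.trans (by ring)
  have hsum : ∀ E, g * E ≤ n →
      (∑ y ∈ Finset.range (g * E), (if fibWord y then 1 else 0))
        = E * (∑ x ∈ Finset.range g, (if fibWord x then 1 else 0)) := by
    intro E
    induction E with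
    | zero => simp
    | succ E ih =>
      intro hE
      have hEe : g * (E + 1) = g * E + g := by ring
      rw [hEe] at hE
      rw [show g * (E + 1) = g * E + g by ring, Finset.sum_range_add,
          ih (by omega)]
      have : ∀ x ∈ Finset.range g, (if fibWord (g * E + x) then 1 else 0)
          = (if fibWord x then 1 else 0) := by
        intro x hx
        have hxg := Finset.mem_range.1 hx
        rw [hperiod (g * E + x) (by omega), Nat.mul_add_mod, Nat.mod_eq_of_lt hxg]
      rw [Finset.sum_congr rfl this]
      ring
  have hcnt := count_fib m
  rw [← hn] at hcnt
  have hdvd1 : e ∣ Nat.fib m := by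
    refine ⟨∑ x ∈ Finset.range g, (if fibWord x then 1 else 0), ?_⟩
    rw [← hcnt, hne', hsum e (le_of_eq hne'.symm)]
  have hdvd2 : e ∣ Nat.fib (m + 2) := ⟨g, by rw [show Nat.fib (m+2) = n from rfl, hne']; ring⟩
  have hgcd : Nat.gcd (Nat.fib m) (Nat.fib (m + 2)) = 1 := by
    rw [← Nat.fib_gcd]
    have h1 : Nat.gcd m (m + 2) = Nat.gcd m 2 := by
      rw [show m + 2 = 2 + m by ring, Nat.gcd_add_self_right]
    rw [h1]
    have h2 : Nat.gcd m 2 ∣ 2 := Nat.gcd_dvd_right m 2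
    rcases (Nat.dvd_prime Nat.prime_two).1 h2 with h | h
    · rw [h]; rfl
    · rw [h]; rfl
  have he1 : e = 1 := Nat.eq_one_of_dvd_coprimes hgcd hdvd1 hdvd2
  have : n = g := by rw [he1, mul_one] at hne'; exact hne'
  omega

lemma RotInj {m p q : ℕ} (hp : p < fn m) (hq : q < fn m)
    (h : ∀ s, s < fn m → fibWord ((p + s) % fn m) = fibWord ((q + s) % fn m)) : p = q := by
  rcases le_total p q with hpq | hpq
  · exact RotInj_aux hpq hp hq h
  · exact (RotInj_aux hpq hq hp (fun s hs => (h s hs).symm)).symm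
lemma Pos_ge (k : ℕ) : ∀ t, t ≤ Pos k t := by
  intro t
  induction t with
  | zero => exact Nat.zero_le _
  | succ t ih => rw [Pos_succ]; have := bsize_pos k t; omega

lemma subst_take_len {α : Type*} {m : ℕ} (Ra Rb : List α)
    (hRa : Ra.length = fn (m + 1)) (hRb : Rb.length = fn m) :
    ∀ t N, t ≤ N →
    ((((List.range N).map (fun u => if fibWord u = false then Ra else Rb)).take t).flatten).length
      = Pos m t := by
  intro t
  induction t with
  | zero => simp [Pos]
  | succ t ih =>
    intro N htN
    have hlen : t < ((List.range N).map (fun u => if fibWord u = false then Ra else Rb)).length := by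
      simp; omega
    rw [List.take_succ, List.flatten_append, List.length_append, ih N (by omega), Pos_succ]
    congr 1
    rw [List.getElem?_eq_getElem hlen]
    simp only [Option.toList_some, List.flatten_cons, List.flatten_nil, List.append_nil,
      List.getElem_map, List.getElem_range]
    rw [bsize]
    cases hw : fibWord t with
    | false => simp [hw, hRa]
    | true => simp [hw, hRb]

lemma subst_eval {α : Type*} {m t r : ℕ} (Ra Rb : List α) (d : α)
    (hRa : Ra.length = fn (m + 1)) (hRb : Rb.length = fn m)
    (hr : r < bsize m t) :
    substLetter Ra Rb d (Pos m t + r) = (if fibWord t = false then Ra else Rb).getD r d := by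
  set x := Pos m t + r with hx
  have htx : t < x + 1 := by have := Pos_ge m t; omega
  rw [substLetter, substBlocks]
  have hlen : t < ((List.range (x + 1)).map (fun u => if fibWord u = false then Ra else Rb)).length := by
    simp; omega
  have hgd : (((List.range (x + 1)).map (fun u => if fibWord u = false then Ra else Rb)).getD t [])
      = (if fibWord t = false then Ra else Rb) := by
    rw [List.getD_eq_getElem _ _ hlen]
    simp
  have hrlen : r < ((((List.range (x + 1)).map (fun u => if fibWord u = false then Ra else Rb)).getD t [])).length := by
    rw [hgd]
    rw [bsize] at hr
    cases hw : fibWord t with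
    | false => simp [hw, hRa]; rw [hw] at hr; simpa using hr
    | true => simp [hw, hRb]; rw [hw] at hr; simpa using hr
  have e1 := subst_take_len (m := m) Ra Rb hRa hRb t (x + 1) (by omega)
  calc ((List.range (x + 1)).map (fun u => if fibWord u = false then Ra else Rb)).flatten.getD x d
      = ((List.range (x + 1)).map (fun u => if fibWord u = false then Ra else Rb)).flatten.getD
          (((((List.range (x + 1)).map (fun u => if fibWord u = false then Ra else Rb)).take t).flatten).length + r) d := by
        rw [e1]
    _ = ((((List.range (x + 1)).map (fun u => if fibWord u = false then Ra else Rb)).getD t [])).getD r d := flatten_getD d _ t r hrlen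
    _ = _ := by rw [hgd]
lemma fFactor_eq_of {x y n : ℕ} (h : ∀ s, s < n → fibWord (x - 1 + s) = fibWord (y - 1 + s)) :
    fFactor x n = fFactor y n := by
  unfold fFactor
  apply List.map_congr_left
  intro s hs
  exact h s (List.mem_range.1 hs)

lemma fFactor_point {x y n : ℕ} (h : fFactor x n = fFactor y n) :
    ∀ s, s < n → fibWord (x - 1 + s) = fibWord (y - 1 + s) := by
  intro s hs
  unfold fFactor at h
  have hlen : s < ((List.range n).map (fun t => fibWord (x - 1 + t))).length := by simpa using hs
  have h2 := List.getElem_of_eq h hlen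
  simpa using h2

lemma Pos_zero (m : ℕ) : Pos m 0 = 0 := Finset.sum_range_zero _

lemma Pos_one (m : ℕ) : Pos m 1 = fn (m + 1) := by
  rw [show (1:ℕ) = 0 + 1 from rfl, Pos_succ, Pos_zero, bsize, fibWord_zero]
  simp

lemma ref1_rot {m j : ℕ} (hj1 : 1 ≤ j) (hj2 : j ≤ Nat.fib (m + 1) - 1) :
    ∀ s, s < 2 * fn m → fibWord ((j - 1) + s) = fibWord (((j - 1) + s) % fn m) := by
  have hfib := fn_succ_eq m
  have hfp := fib_succ_pos m
  have hmp := fn_pos m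
  have hb0 : bsize m 0 = fn (m + 1) := by rw [bsize, fibWord_zero]; simp
  intro s hs
  have := LemW (m := m) (t := 0) (r := j - 1) (by omega) (fun _ => by omega) s hs
  rw [Pos_zero, Nat.zero_add] at this
  exact this

lemma ref2_rot {m j : ℕ} (hj1 : Nat.fib (m + 1) ≤ j) (hj2 : j ≤ fn m) :
    ∀ s, s < 2 * fn m →
      fibWord ((fn (m + 1) + j - 1) + s) = fibWord (((j - 1) + s) % fn m) := by
  have hfp := fib_succ_pos m
  have hb1 : bsize m 1 = fn m := by rw [bsize, fibWord_one]; simp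
  intro s hs
  have := LemW (m := m) (t := 1) (r := j - 1) (by omega)
    (fun hc => by rw [fibWord_one] at hc; cases hc) s hs
  rw [Pos_one] at this
  rw [show fn (m + 1) + j - 1 + s = fn (m + 1) + (j - 1 + s) by omega]
  exact this

lemma Of2_first {m i r : ℕ} (hrn : r < fn m) (hr2 : r + 2 ≤ Nat.fib (m + 1))
    (hwin : ∀ s, s < 2 * fn m → fibWord ((i - 1) + s) = fibWord ((r + s) % fn m)) :
    Of2 m i = r + 1 := by
  have hmp := fn_pos m
  have hfp := fib_succ_pos m
  have hrot_v := ref1_rot (m := m) (j := r + 1) (by omega) (by omega)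
  have hEq : fFactor i (2 * fn m) = fFactor (r + 1) (2 * fn m) := by
    apply fFactor_eq_of
    intro s hs
    have hv := hrot_v s hs
    rw [show r + 1 - 1 + s = r + s by omega] at hv
    rw [hwin s hs, show r + 1 - 1 + s = r + s by omega]
    exact hv.symm
  have hEx : ∃ j, 1 ≤ j ∧ j ≤ Nat.fib (m + 1) - 1 ∧
      fFactor i (2 * fn m) = fFactor j (2 * fn m) := ⟨r + 1, by omega, by omega, hEq⟩
  rw [Of2, dif_pos hEx]
  obtain ⟨hj1, hj2, hEqj⟩ := hEx.choose_spec
  have hfible : Nat.fib (m + 1) ≤ fn m := Nat.fib_mono (by omega)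
  have hp := fFactor_point hEqj
  have hrotj := ref1_rot hj1 hj2
  have hkey : ∀ s, s < fn m →
      fibWord ((r + s) % fn m) = fibWord ((hEx.choose - 1 + s) % fn m) := by
    intro s hs
    have hs2 : s < 2 * fn m := by omega
    rw [← hwin s hs2, hp s hs2, hrotj s hs2]
  have := RotInj (m := m) hrn (by omega) hkey
  omega

lemma Of2_second {m i r : ℕ} (hrn : r < fn m) (hr2 : Nat.fib (m + 1) - 1 ≤ r)
    (hwin : ∀ s, s < 2 * fn m → fibWord ((i - 1) + s) = fibWord ((r + s) % fn m)) :
    Of2 m i = r + 1 := by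
  have hmp := fn_pos m
  have hfp := fib_succ_pos m
  have hNo1 : ¬∃ j, 1 ≤ j ∧ j ≤ Nat.fib (m + 1) - 1 ∧
      fFactor i (2 * fn m) = fFactor j (2 * fn m) := by
    rintro ⟨j, hj1, hj2, hEqj⟩
    have hp := fFactor_point hEqj
    have hrotj := ref1_rot hj1 hj2
    have hkey : ∀ s, s < fn m →
        fibWord ((r + s) % fn m) = fibWord ((j - 1 + s) % fn m) := by
      intro s hs
      have hs2 : s < 2 * fn m := by omega
      rw [← hwin s hs2, hp s hs2, hrotj s hs2]
    have hfible : Nat.fib (m + 1) ≤ fn m := Nat.fib_mono (by omega)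
    have := RotInj (m := m) hrn (by omega) hkey
    omega
  have hrot_v := ref2_rot (m := m) (j := r + 1) (by omega) (by omega)
  have hEq : fFactor i (2 * fn m) = fFactor (fn (m + 1) + (r + 1)) (2 * fn m) := by
    apply fFactor_eq_of
    intro s hs
    rw [hwin s hs, show fn (m + 1) + (r + 1) - 1 + s = fn (m + 1) + (r + 1) - 1 + s by rfl]
    have := hrot_v s hs
    rw [show r + 1 - 1 + s = r + s by omega] at this
    rw [this]
  have hEx : ∃ j, Nat.fib (m + 1) ≤ j ∧ j ≤ fn m ∧
      fFactor i (2 * fn m) = fFactor (fn (m + 1) + j) (2 * fn m) :=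
    ⟨r + 1, by omega, by omega, hEq⟩
  rw [Of2, dif_neg hNo1, dif_pos hEx]
  obtain ⟨hj1, hj2, hEqj⟩ := hEx.choose_spec
  have hp := fFactor_point hEqj
  have hrotj := ref2_rot hj1 hj2
  have hkey : ∀ s, s < fn m →
      fibWord ((r + s) % fn m) = fibWord ((hEx.choose - 1 + s) % fn m) := by
    intro s hs
    have hs2 : s < 2 * fn m := by omega
    have hp' := hp s hs2
    rw [show fn (m + 1) + hEx.choose - 1 + s = fn (m + 1) + hEx.choose - 1 + s from rfl] at hp'
    rw [← hwin s hs2, hp' , hrotj s hs2]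
  have := RotInj (m := m) hrn (by omega) hkey
  omega

lemma Of2_zero {m i : ℕ}
    (hmis : ∃ s, s < fn m ∧ fibWord ((i - 1) + s) ≠ fibWord ((i - 1) + s + fn m)) :
    Of2 m i = 0 := by
  have hmp := fn_pos m
  obtain ⟨s0, hs0, hne⟩ := hmis
  have hNo1 : ¬∃ j, 1 ≤ j ∧ j ≤ Nat.fib (m + 1) - 1 ∧
      fFactor i (2 * fn m) = fFactor j (2 * fn m) := by
    rintro ⟨j, hj1, hj2, hEqj⟩
    have hp := fFactor_point hEqj
    have hrotj := ref1_rot hj1 hj2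
    apply hne
    have e1 := hp s0 (by omega)
    have e2 := hp (s0 + fn m) (by omega)
    rw [hrotj s0 (by omega)] at e1
    rw [hrotj (s0 + fn m) (by omega),
        show j - 1 + (s0 + fn m) = (j - 1 + s0) + fn m by omega, Nat.add_mod_right,
        show i - 1 + (s0 + fn m) = i - 1 + s0 + fn m by omega] at e2
    rw [e1, ← e2]
  have hNo2 : ¬∃ j, Nat.fib (m + 1) ≤ j ∧ j ≤ fn m ∧
      fFactor i (2 * fn m) = fFactor (fn (m + 1) + j) (2 * fn m) := by
    rintro ⟨j, hj1, hj2, hEqj⟩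
    have hp := fFactor_point hEqj
    have hrotj := ref2_rot hj1 hj2
    apply hne
    have e1 := hp s0 (by omega)
    have e2 := hp (s0 + fn m) (by omega)
    rw [hrotj s0 (by omega)] at e1
    rw [hrotj (s0 + fn m) (by omega),
        show j - 1 + (s0 + fn m) = (j - 1 + s0) + fn m by omega, Nat.add_mod_right,
        show i - 1 + (s0 + fn m) = i - 1 + s0 + fn m by omega] at e2
    rw [e1, ← e2]
  rw [Of2, dif_neg hNo1, dif_neg hNo2]
/-- The position sequence of squares of length `2f_m` is the Fibonacci word over the
blocks `R_a = [1,…,f_{m-1}-1,0,…,0]` (with `f_m + 1` zeros) and `R_b = [1,…,f_m]`. -/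
theorem position_sequence_of_squares (m i : ℕ) (hi : 1 ≤ i) :
    Of2 m i =
      substLetter
        ((List.range (Nat.fib (m + 1) - 1)).map (· + 1) ++ List.replicate (fn m + 1) 0)
        ((List.range (fn m)).map (· + 1)) 0 (i - 1) := by
  have hmp := fn_pos m
  have hfp := fib_succ_pos m
  have hfib := fn_succ_eq m
  have hfible : Nat.fib (m + 1) ≤ fn m := Nat.fib_mono (by omega)
  set Ra := (List.range (Nat.fib (m + 1) - 1)).map (· + 1) ++ List.replicate (fn m + 1) 0
    with hRadef
  set Rb := (List.range (fn m)).map (· + 1) with hRbdef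
  have hRa : Ra.length = fn (m + 1) := by
    rw [hRadef]; simp; omega
  have hRb : Rb.length = fn m := by rw [hRbdef]; simp
  obtain ⟨t, r, hr, hx⟩ := exists_decomp m (i - 1)
  rw [hx, subst_eval Ra Rb 0 hRa hRb hr]
  cases ht : fibWord t with
  | false =>
    have hbs : bsize m t = fn (m + 1) := by rw [bsize, ht]; simp
    rw [if_pos rfl]
    rcases Nat.lt_or_ge r (Nat.fib (m + 1) - 1) with hzone | hzone
    · have hwin : ∀ s, s < 2 * fn m → fibWord (i - 1 + s) = fibWord ((r + s) % fn m) := by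
        intro s hs
        rw [hx, Nat.add_assoc]
        exact LemW hr (fun _ => by omega) s hs
      rw [Of2_first (by omega) (by omega) hwin]
      rw [hRadef, List.getD_append _ _ _ _ (by simp; omega),
          List.getD_eq_getElem _ _ (by simp; omega)]
      simp
    · have hmis := LemZ (m := m) ht hzone (by omega)
      rw [← hx] at hmis
      rw [Of2_zero hmis]
      rw [hRadef, List.getD_append_right _ _ _ _ (by simp; omega),
          List.getD_eq_getElem _ _ (by simp; omega)]
      simp
  | true =>
    have hbs : bsize m t = fn m := by rw [bsize, ht]; simp
    have hrn : r < fn m := by omega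
    have hwin : ∀ s, s < 2 * fn m → fibWord (i - 1 + s) = fibWord ((r + s) % fn m) := by
      intro s hs
      rw [hx, Nat.add_assoc]
      exact LemW hr (fun hc => by rw [ht] at hc; cases hc) s hs
    have hOf : Of2 m i = r + 1 := by
      rcases Nat.lt_or_ge r (Nat.fib (m + 1) - 1) with hzone | hzone
      · exact Of2_first hrn (by omega) hwin
      · exact Of2_second hrn hzone hwin
    rw [hOf, if_neg (by simp),
        hRbdef, List.getD_eq_getElem _ _ (by simp; omega)]
    simp
end
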